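/- Any two distinct faces of a 2-colex intersect in an even number of vertices: either 0 or exactly the 2 endpoints of a shared edge. -/
import Mathlib


/-- Any two distinct faces of a 2-colex intersect in an even number of
vertices: either they are disjoint, or they intersect in exactly the two endpoints of a
shared edge.  The 2-colex is modeled as a trivalent graph `G` without parallel edges,
together with its faces: each face has a set of boundary edges `bd f ⊆ E(G)`, its vertex
set `f` consists of the endpoints of its boundary edges, every edge lies on exactly two
faces, every vertex lies on exactly three faces (one of each color), and two distinct
faces share at most one edge. -/
theorem distinct_faces_share_zero_or_two_vertices
    {V : Type*} [Fintype V] [DecidableEq V]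
    (G : SimpleGraph V) [DecidableRel G.Adj]
    (htrivalent : ∀ v : V, G.degree v = 3)
    (faces : Finset (Finset V))
    (bd : Finset V → Finset (Sym2 V))
    (hbd_edges : ∀ f ∈ faces, ∀ e ∈ bd f, e ∈ G.edgeFinset)
    (hvertices : ∀ f ∈ faces, ∀ v : V, v ∈ f ↔ ∃ e ∈ bd f, v ∈ e)
    (htwofaces : ∀ e ∈ G.edgeFinset, (faces.filter (fun f => e ∈ bd f)).card = 2)
    (hthreefaces : ∀ v : V, (faces.filter (fun f => v ∈ f)).card = 3)
    (hshared : ∀ f ∈ faces, ∀ f' ∈ faces, f ≠ f' → (bd f ∩ bd f').card ≤ 1) :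
    ∀ f ∈ faces, ∀ f' ∈ faces, f ≠ f' →
      f ∩ f' = ∅ ∨
      ∃ u v : V, u ≠ v ∧ s(u, v) ∈ bd f ∩ bd f' ∧ f ∩ f' = {u, v} := by
  -- Key claim: if `v` lies on two distinct faces, those faces share a boundary
  -- edge through `v`.
  have key : ∀ f ∈ faces, ∀ f' ∈ faces, f ≠ f' → ∀ v : V, v ∈ f → v ∈ f' →
      ∃ e, e ∈ bd f ∧ e ∈ bd f' ∧ v ∈ e := by
    intro f hf f' hf' hne v hv hv'
    by_contra hcon
    push_neg at hcon
    set Ev := G.incidenceFinset v with hEvdef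
    set Fv := faces.filter (fun g => v ∈ g) with hFvdef
    have hEvcard : Ev.card = 3 := by
      rw [hEvdef, SimpleGraph.card_incidenceFinset_eq_degree, htrivalent]
    have hFvcard : Fv.card = 3 := hthreefaces v
    have hmemEv : ∀ e : Sym2 V, e ∈ Ev ↔ e ∈ G.edgeFinset ∧ v ∈ e := by
      intro e
      simp [hEvdef, SimpleGraph.mem_incidenceFinset, SimpleGraph.incidenceSet,
        SimpleGraph.mem_edgeFinset]
    -- the set of boundary edges of a face `g` incident to `v`
    set S : Finset V → Finset (Sym2 V) := fun g => Ev.filter (fun e => e ∈ bd g) with hSdef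
    have hSsub : ∀ g, S g ⊆ Ev := fun g => Finset.filter_subset _ _
    -- double counting
    have hsum : ∑ g ∈ Fv, (S g).card = 6 := by
      have h1 : ∑ g ∈ Fv, (S g).card = ∑ e ∈ Ev, (Fv.filter (fun g => e ∈ bd g)).card := by
        simp only [hSdef, Finset.card_filter]
        exact Finset.sum_comm
      have h2 : ∀ e ∈ Ev, (Fv.filter (fun g => e ∈ bd g)).card = 2 := by
        intro e he
        have he' := (hmemEv e).mp he
        have : Fv.filter (fun g => e ∈ bd g) = faces.filter (fun g => e ∈ bd g) := by
          ext g
          simp only [hFvdef, Finset.mem_filter, and_assoc]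
          constructor
          · rintro ⟨hg, -, hbg⟩; exact ⟨hg, hbg⟩
          · rintro ⟨hg, hbg⟩
            exact ⟨hg, (hvertices g hg v).mpr ⟨e, hbg, he'.2⟩, hbg⟩
        rw [this]
        exact htwofaces e he'.1
      rw [h1, Finset.sum_congr rfl h2, Finset.sum_const, hEvcard]
      norm_num
    -- every face of `Fv` has a boundary edge at `v`
    have hlb : ∀ g ∈ Fv, 1 ≤ (S g).card := by
      intro g hg
      rw [hFvdef, Finset.mem_filter] at hg
      obtain ⟨e, hbg, hve⟩ := (hvertices g hg.1 v).mp hg.2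
      have : e ∈ S g :=
        Finset.mem_filter.mpr ⟨(hmemEv e).mpr ⟨hbd_edges g hg.1 e hbg, hve⟩, hbg⟩
      exact Finset.card_pos.mpr ⟨e, this⟩
    -- two distinct faces share at most one boundary edge at `v`
    have hpair : ∀ g ∈ Fv, ∀ h ∈ Fv, g ≠ h → (S g ∩ S h).card ≤ 1 := by
      intro g hg h hh hgh
      rw [hFvdef, Finset.mem_filter] at hg hh
      refine le_trans (Finset.card_le_card ?_) (hshared g hg.1 h hh.1 hgh)
      intro e he
      rw [Finset.mem_inter] at he ⊢
      exact ⟨(Finset.mem_filter.mp he.1).2, (Finset.mem_filter.mp he.2).2⟩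
    have hfFv : f ∈ Fv := Finset.mem_filter.mpr ⟨hf, hv⟩
    have hf'Fv : f' ∈ Fv := Finset.mem_filter.mpr ⟨hf', hv'⟩
    -- the third face through `v`
    have hthird : ((Fv.erase f).erase f').Nonempty := by
      rw [← Finset.card_pos, Finset.card_erase_of_mem
        (Finset.mem_erase.mpr ⟨Ne.symm hne, hf'Fv⟩), Finset.card_erase_of_mem hfFv, hFvcard]
      norm_num
    obtain ⟨f'', hf''⟩ := hthird
    have hf''ne' : f'' ≠ f' := (Finset.mem_erase.mp hf'').1
    have hf''ne : f'' ≠ f := (Finset.mem_erase.mp (Finset.mem_erase.mp hf'').2).1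
    have hf''Fv : f'' ∈ Fv := (Finset.mem_erase.mp (Finset.mem_erase.mp hf'').2).2
    -- Fv = {f, f', f''}
    have hFveq : Fv = {f, f', f''} := by
      refine (Finset.eq_of_subset_of_card_le ?_ ?_).symm
      · intro g hg
        rcases Finset.mem_insert.mp hg with rfl | hg
        · exact hfFv
        rcases Finset.mem_insert.mp hg with rfl | hg
        · exact hf'Fv
        · rw [Finset.mem_singleton.mp hg]; exact hf''Fv
      · rw [hFvcard, Finset.card_insert_of_notMem (by simp [hne, Ne.symm hf''ne]),
          Finset.card_insert_of_notMem (by simp [Ne.symm hf''ne']), Finset.card_singleton]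
    have hsum3 : (S f).card + (S f').card + (S f'').card = 6 := by
      rw [hFveq] at hsum
      rw [Finset.sum_insert (by simp [hne, hf''ne.symm]),
        Finset.sum_insert (by simp [hf''ne'.symm]), Finset.sum_singleton] at hsum
      omega
    -- `S f` and `S f'` are disjoint by assumption `hcon`
    have hdisj : S f ∩ S f' = ∅ := by
      rw [Finset.eq_empty_iff_forall_notMem]
      intro e he
      rw [Finset.mem_inter] at he
      have h1 := Finset.mem_filter.mp he.1
      have h2 := Finset.mem_filter.mp he.2
      exact hcon e h1.2 h2.2 ((hmemEv e).mp h1.1).2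
    have hunion : (S f).card + (S f').card ≤ 3 := by
      have := Finset.card_union_of_disjoint (Finset.disjoint_iff_inter_eq_empty.mpr hdisj)
        (s := S f) (t := S f')
      rw [← this]
      calc (S f ∪ S f').card ≤ Ev.card :=
            Finset.card_le_card (Finset.union_subset (hSsub f) (hSsub f'))
        _ = 3 := hEvcard
    -- so `S f''` must be all of `Ev`
    have hSf'' : S f'' = Ev := by
      apply Finset.eq_of_subset_of_card_le (hSsub f'')
      omega
    have hSfle : (S f).card ≤ 1 := by
      have : S f ∩ S f'' = S f := by
        apply Finset.inter_eq_left.mpr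
        rw [hSf'']; exact hSsub f
      have := hpair f hfFv f'' hf''Fv hf''ne.symm
      rwa [‹S f ∩ S f'' = S f›] at this
    have hSf'le : (S f').card ≤ 1 := by
      have : S f' ∩ S f'' = S f' := by
        apply Finset.inter_eq_left.mpr
        rw [hSf'']; exact hSsub f'
      have := hpair f' hf'Fv f'' hf''Fv hf''ne'.symm
      rwa [‹S f' ∩ S f'' = S f'›] at this
    have : (S f'').card ≤ 3 := le_trans (Finset.card_le_card (hSsub f'')) (le_of_eq hEvcard)
    omega
  -- Main argument
  intro f hf f' hf' hne
  by_cases hdisj : f ∩ f' = ∅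
  · exact Or.inl hdisj
  right
  obtain ⟨v, hv⟩ := Finset.nonempty_iff_ne_empty.mpr hdisj
  rw [Finset.mem_inter] at hv
  obtain ⟨e, hef, hef', hve⟩ := key f hf f' hf' hne v hv.1 hv.2
  -- `bd f ∩ bd f' = {e}`
  have hone : ∀ e' ∈ bd f ∩ bd f', e' = e := by
    intro e' he'
    have h1 := hshared f hf f' hf' hne
    have he : e ∈ bd f ∩ bd f' := Finset.mem_inter.mpr ⟨hef, hef'⟩
    exact Finset.card_le_one.mp h1 e' he' e he
  induction e with
  | h u w =>
  have huw : u ≠ w := by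
    have := hbd_edges f hf _ hef
    rw [SimpleGraph.mem_edgeFinset, SimpleGraph.mem_edgeSet] at this
    exact this.ne
  refine ⟨u, w, huw, Finset.mem_inter.mpr ⟨hef, hef'⟩, ?_⟩
  ext x
  simp only [Finset.mem_inter, Finset.mem_insert, Finset.mem_singleton]
  constructor
  · rintro ⟨hxf, hxf'⟩
    obtain ⟨e', he'f, he'f', hxe'⟩ := key f hf f' hf' hne x hxf hxf'
    have : e' = s(u, w) := hone e' (Finset.mem_inter.mpr ⟨he'f, he'f'⟩)
    rw [this, Sym2.mem_iff] at hxe'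
    exact hxe'
  · rintro (rfl | rfl)
    · exact ⟨(hvertices f hf x).mpr ⟨s(x, w), hef, Sym2.mem_mk_left x w⟩,
        (hvertices f' hf' x).mpr ⟨s(x, w), hef', Sym2.mem_mk_left x w⟩⟩
    · exact ⟨(hvertices f hf x).mpr ⟨s(u, x), hef, Sym2.mem_mk_right u x⟩,
        (hvertices f' hf' x).mpr ⟨s(u, x), hef', Sym2.mem_mk_right u x⟩⟩
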